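/- For every n ≥ 1, the n-bit register machine Mₙ is minimal: every state of Mₙ is reachable from the initial state, and any two distinct states of Mₙ have different behaviours. Consequently, Mₙ has exactly n · 2ⁿ states, all with pairwise distinct behaviour. -/

import Mathlib

/-- A Moore machine with input alphabet `I` and output alphabet `O`:
a finite set of states `Q`, a transition function `δ`, an output
function `o` and an initial state `q₀`. -/
structure Moore (I O : Type) where
  Q : Type
  [fin : Fintype Q]
  δ : Q → I → Q
  o : Q → O
  q₀ : Q

attribute [instance] Moore.fin

namespace Moore

variable {I O O₁ O₂ : Type}

/-- The transition function extended to words: `δ(q, ε) = q`, `δ(q, aw) = δ(δ(q,a), w)`. -/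
def run (M : Moore I O) (q : M.Q) : List I → M.Q
  | [] => q
  | a :: w => M.run (M.δ q a) w

/-- The behaviour of a state: `⟦q⟧(w) = o(δ(q, w))`. -/
def stateBeh (M : Moore I O) (q : M.Q) (w : List I) : O := M.o (M.run q w)

/-- The behaviour of a machine: `⟦M⟧ = ⟦q₀⟧`. -/
def beh (M : Moore I O) (w : List I) : O := M.stateBeh M.q₀ w

/-- The size of a machine: the number of its states. -/
def size (M : Moore I O) : ℕ := Fintype.card M.Q

/-- A state is reachable if it is `δ(q₀, w)` for some word `w`. -/
def Reachable (M : Moore I O) (q : M.Q) : Prop := ∃ w : List I, M.run M.q₀ w = q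

/-- A machine is minimal if all states are reachable and distinct states
have different behaviour. -/
def Minimal (M : Moore I O) : Prop :=
  (∀ q, M.Reachable q) ∧ ∀ q q' : M.Q, M.stateBeh q = M.stateBeh q' → q = q'

/-- The product of two Moore machines over the same input alphabet. -/
def prod (M₁ : Moore I O₁) (M₂ : Moore I O₂) : Moore I (O₁ × O₂) where
  Q := M₁.Q × M₂.Q
  δ := fun q a => (M₁.δ q.1 a, M₂.δ q.2 a)
  o := fun q => (M₁.o q.1, M₂.o q.2)
  q₀ := (M₁.q₀, M₂.q₀)

/-- The first component of a machine with product outputs. -/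
def comp₁ (M : Moore I (O₁ × O₂)) : Moore I O₁ :=
  { Q := M.Q, δ := M.δ, o := fun q => (M.o q).1, q₀ := M.q₀ }

/-- The second component of a machine with product outputs. -/
def comp₂ (M : Moore I (O₁ × O₂)) : Moore I O₂ :=
  { Q := M.Q, δ := M.δ, o := fun q => (M.o q).2, q₀ := M.q₀ }

end Moore

/-- The input alphabet of the `n`-bit register machine: move left, move right, flip. -/
inductive RegInput : Type
  | L : RegInput
  | R : RegInput
  | F : RegInput

/-- The `n`-bit register machine `Mₙ`: states are a bit vector together with a head
position; `L`/`R` move the head (wrapping around), `F` flips the bit under the head;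
the output is the bit vector. -/
def regMachine (n : ℕ) (hn : 0 < n) : Moore RegInput (Fin n → Bool) :=
  letI : NeZero n := ⟨hn.ne'⟩
  { Q := (Fin n → Bool) × Fin n
    δ := fun q i =>
      match i with
      | .L => (q.1, q.2 - 1)
      | .R => (q.1, q.2 + 1)
      | .F => (Function.update q.1 q.2 (!(q.1 q.2)), q.2)
    o := fun q => q.1
    q₀ := (fun _ => false, ⟨0, hn⟩) }

/-- The `l`-th component machine `Mₙˡ` of the `n`-bit register machine: states are a
single bit together with a head position; `L`/`R` move the head (wrapping around),
`F` flips the bit only when the head is at position `l`; the output is the bit. -/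
def regComponent (n : ℕ) (hn : 0 < n) (l : Fin n) : Moore RegInput Bool :=
  letI : NeZero n := ⟨hn.ne'⟩
  { Q := Bool × Fin n
    δ := fun q i =>
      match i with
      | .L => (q.1, q.2 - 1)
      | .R => (q.1, q.2 + 1)
      | .F => (if q.2 = l then !q.1 else q.1, q.2)
    o := fun q => q.1
    q₀ := (false, ⟨0, hn⟩) }


section RegAux

lemma Moore.run_append {I O : Type} (M : Moore I O) (q : M.Q) (w w' : List I) :
    M.run q (w ++ w') = M.run (M.run q w) w' := by
  induction w generalizing q with
  | nil => rfl
  | cons a w ih => simp [Moore.run, ih]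

variable {n : ℕ} [NeZero n]

open Fin.NatCast

lemma reg_run_R (hn : 0 < n) (q : (regMachine n hn).Q) (m : ℕ) :
    (regMachine n hn).run q (List.replicate m .R) = (q.1, q.2 + (m : Fin n)) := by
  induction m generalizing q with
  | zero => simp [Moore.run]; rfl
  | succ m ih =>
    rw [List.replicate_succ]
    show (regMachine n hn).run (q.1, q.2 + 1) (List.replicate m .R) = _
    erw [ih]
    simp [add_assoc, add_comm (1 : Fin n)]; rfl

lemma reg_reach_R (hn : 0 < n) (b : Fin n → Bool) (k k' : Fin n)
    (h : (regMachine n hn).Reachable (b, k)) : (regMachine n hn).Reachable (b, k') := by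
  obtain ⟨w, hw⟩ := h
  refine ⟨w ++ List.replicate (k' - k).val .R, ?_⟩
  erw [Moore.run_append, hw, reg_run_R]
  simp; rfl

lemma reg_reach_all (hn : 0 < n) (b : Fin n → Bool) (k : Fin n) :
    (regMachine n hn).Reachable (b, k) := by
  have key : ∀ s : Finset (Fin n), ∀ b : Fin n → Bool,
      (∀ i, b i = true ↔ i ∈ s) → ∀ k, (regMachine n hn).Reachable (b, k) := by
    intro s
    induction s using Finset.induction_on with
    | empty =>
      intro b hb k
      have hb' : b = fun _ => false := by
        funext i
        simpa using (hb i)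
      subst hb'
      apply reg_reach_R hn _ (⟨0, hn⟩ : Fin n)
      exact ⟨[], rfl⟩
    | @insert a s ha ih =>
      intro b hb k
      set b' : Fin n → Bool := Function.update b a false with hb'def
      have hIH : ∀ k, (regMachine n hn).Reachable (b', k) := by
        apply ih
        intro i
        by_cases hi : i = a
        · subst hi; simp [hb'def, ha]
        · simp only [hb'def, Function.update_of_ne hi]
          rw [hb i]
          simp [hi]
      have hba : b a = true := (hb a).2 (Finset.mem_insert_self a s)
      obtain ⟨w, hw⟩ := hIH a
      have : (regMachine n hn).Reachable (b, a) := by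
        refine ⟨w ++ [.F], ?_⟩
        rw [Moore.run_append, hw]
        show (Function.update b' a (!(b' a)), a) = (b, a)
        have : Function.update b' a (!(b' a)) = b := by
          funext i
          by_cases hi : i = a
          · subst hi; simp [hb'def, hba]
          · simp [hb'def, Function.update_of_ne hi]
        rw [this]
      exact reg_reach_R hn b a k this
  exact key (Finset.univ.filter (fun i => b i = true)) b (by simp) k

lemma reg_beh_inj (hn : 0 < n) (q q' : (regMachine n hn).Q)
    (h : (regMachine n hn).stateBeh q = (regMachine n hn).stateBeh q') : q = q' := by
  obtain ⟨b, k⟩ := q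
  obtain ⟨b', k'⟩ := q'
  have h0 : b = b' := congrFun h []
  subst h0
  have h1 : Function.update b k (!(b k)) = Function.update b k' (!(b k')) :=
    congrFun h [.F]
  have hkk : k = k' := by
    by_contra hne
    have := congrFun h1 k
    rw [Function.update_self, Function.update_of_ne hne] at this
    exact (Bool.not_ne_self (b k)) this
  rw [hkk]

end RegAux

/-- The `n`-bit register machine is minimal, and it has exactly `n ⬝ 2ⁿ` states. -/
theorem regMachine_minimal (n : ℕ) (hn : 1 ≤ n) :
    (regMachine n hn).Minimal ∧ (regMachine n hn).size = n * 2 ^ n := by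
  haveI : NeZero n := ⟨Nat.one_le_iff_ne_zero.mp hn⟩
  refine ⟨⟨fun q => ?_, fun q q' => reg_beh_inj hn q q'⟩, ?_⟩
  · obtain ⟨b, k⟩ := q
    exact reg_reach_all hn b k
  · show Fintype.card ((Fin n → Bool) × Fin n) = n * 2 ^ n
    simp [mul_comm]
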